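/- arXiv:1302.0633 — 6 statements merged into one kernel-verified Lean document; each statement's English description precedes it below -/
import Mathlib

section
/- Let U ⊆ ℂⁿ be a connected open set and let f : U → ℂ be holomorphic and not identically zero on U. Then the open set { z ∈ U : f(z) ≠ 0 } is dense in U and connected. -/
open Convex Set Metric Filter Topology

/-- In `ℂ` (as a 2-dimensional real vector space), any two points of a convex open set minus a
countable set can be joined by a path inside the convex set minus the countable set. -/
theorem aux_joinedIn_convex_diff_countable {S Z : Set ℂ} (hS : Convex ℝ S) (hSo : IsOpen S)
    (hZ : Z.Countable) {a b : ℂ} (ha : a ∈ S \ Z) (hb : b ∈ S \ Z) :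
    JoinedIn (S \ Z) a b := by
  rcases eq_or_ne a b with rfl | hab
  · exact JoinedIn.refl ha
  have hrank : 1 < Module.rank ℝ ℂ := by
    rw [Complex.rank_real_complex]; norm_num
  let c : ℂ := (2 : ℝ)⁻¹ • (a + b)
  let x : ℂ := (2 : ℝ)⁻¹ • (b - a)
  have Ia : c - x = a := by simp only [c, x]; module
  have Ib : c + x = b := by simp only [c, x]; module
  have x_ne_zero : x ≠ 0 := by simpa [x] using sub_ne_zero.2 hab.symm
  obtain ⟨y, hy⟩ : ∃ y, LinearIndependent ℝ ![x, y] :=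
    exists_linearIndependent_pair_of_one_lt_rank hrank x_ne_zero
  have A : Set.Countable {t : ℝ | ([c + x -[ℝ] c + t • y] ∩ Z).Nonempty} := by
    apply countable_setOf_nonempty_of_disjoint _ (fun t ↦ inter_subset_right) hZ
    intro t t' htt'
    apply disjoint_iff_inter_eq_empty.2
    have N : {c + x} ∩ Z = ∅ := by
      simpa only [singleton_inter_eq_empty, mem_compl_iff, Ib] using hb.2
    rw [inter_assoc, inter_comm Z, inter_assoc, inter_self, ← inter_assoc, ← subset_empty_iff, ← N]
    apply inter_subset_inter_left
    apply Eq.subset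
    apply segment_inter_eq_endpoint_of_linearIndependent_of_ne hy htt'.symm
  have B : Set.Countable {t : ℝ | ([c - x -[ℝ] c + t • y] ∩ Z).Nonempty} := by
    apply countable_setOf_nonempty_of_disjoint _ (fun t ↦ inter_subset_right) hZ
    intro t t' htt'
    apply disjoint_iff_inter_eq_empty.2
    have N : {c - x} ∩ Z = ∅ := by
      simpa only [singleton_inter_eq_empty, mem_compl_iff, Ia] using ha.2
    rw [inter_assoc, inter_comm Z, inter_assoc, inter_self, ← inter_assoc, ← subset_empty_iff, ← N]
    apply inter_subset_inter_left
    rw [sub_eq_add_neg _ x]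
    apply Eq.subset
    apply segment_inter_eq_endpoint_of_linearIndependent_of_ne _ htt'.symm
    convert hy.units_smul ![-1, 1]
    simp [← List.ofFn_inj]
    all_goals rfl
  -- `c ∈ S` since it is the midpoint of `a` and `b`
  have hcS : c ∈ S := by
    have := hS ha.1 hb.1 (by norm_num : (0:ℝ) ≤ 2⁻¹) (by norm_num : (0:ℝ) ≤ 2⁻¹) (by norm_num)
    simpa [c, smul_add] using this
  -- find a small interval around `0` mapping into `S` under `t ↦ c + t • y`
  have hcont : Continuous fun t : ℝ => c + t • y := by continuity
  have hpre : IsOpen ((fun t : ℝ => c + t • y) ⁻¹' S) := hSo.preimage hcont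
  have h0pre : (0 : ℝ) ∈ (fun t : ℝ => c + t • y) ⁻¹' S := by simpa using hcS
  obtain ⟨ε, hε, hball⟩ := Metric.isOpen_iff.1 hpre 0 h0pre
  have hIooSub : Ioo (-ε) ε ⊆ (fun t : ℝ => c + t • y) ⁻¹' S := by
    intro t ht
    apply hball
    simp only [Metric.mem_ball, Real.dist_eq, sub_zero]
    rw [abs_lt]; exact ⟨ht.1, ht.2⟩
  -- pick a good `t` in the interval avoiding the countable bad set
  have hd : Dense ({t : ℝ | ([c + x -[ℝ] c + t • y] ∩ Z).Nonempty}
      ∪ {t : ℝ | ([c - x -[ℝ] c + t • y] ∩ Z).Nonempty})ᶜ := (A.union B).dense_compl ℝ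
  obtain ⟨t, htIoo, ht⟩ : ∃ t, t ∈ Ioo (-ε) ε ∧ t ∈ ({t : ℝ |
      ([c + x -[ℝ] c + t • y] ∩ Z).Nonempty}
      ∪ {t : ℝ | ([c - x -[ℝ] c + t • y] ∩ Z).Nonempty})ᶜ := by
    have hIoo_ne : (Ioo (-ε) ε).Nonempty := ⟨0, by rw [Set.mem_Ioo]; constructor <;> linarith⟩
    obtain ⟨t, ht1, ht2⟩ := hd.exists_mem_open isOpen_Ioo hIoo_ne
    exact ⟨t, ht2, ht1⟩
  set z := c + t • y with hz
  have hzS : z ∈ S := hIooSub htIoo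
  simp only [compl_union, mem_inter_iff, mem_compl_iff, mem_setOf_eq,
    not_nonempty_iff_eq_empty] at ht
  have JA : JoinedIn (S \ Z) a z := by
    apply JoinedIn.of_segment_subset
    rw [subset_diff]
    constructor
    · rw [← Ia]; exact hS.segment_subset (by rw [Ia]; exact ha.1) hzS
    · rw [Set.disjoint_iff_inter_eq_empty, ← Ia]
      exact ht.2
  have JB : JoinedIn (S \ Z) b z := by
    apply JoinedIn.of_segment_subset
    rw [subset_diff]
    constructor
    · rw [← Ib]; exact hS.segment_subset (by rw [Ib]; exact hb.1) hzS
    · rw [Set.disjoint_iff_inter_eq_empty, ← Ib]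
      exact ht.1
  exact JA.trans JB.symm

/-- The zero set of an analytic function, not identically zero, on a preconnected open subset of
`ℂ` is countable. -/
theorem aux_countable_zeros {S : Set ℂ} (hSo : IsOpen S) (hSc : IsPreconnected S)
    {g : ℂ → ℂ} (hg : AnalyticOnNhd ℂ g S) {t₀ : ℂ} (ht₀ : t₀ ∈ S) (h0 : g t₀ ≠ 0) :
    {t | t ∈ S ∧ g t = 0}.Countable := by
  set Z := {t | t ∈ S ∧ g t = 0} with hZdef
  have hdisc : DiscreteTopology Z := by
    rw [discreteTopology_subtype_iff]
    intro t ht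
    rcases (hg t ht.1).eventually_eq_zero_or_eventually_ne_zero with h | h
    · exfalso
      apply h0
      have hev : g =ᶠ[𝓝 t] 0 := by filter_upwards [h] with z hz using hz
      exact hg.eqOn_zero_of_preconnected_of_eventuallyEq_zero hSc ht.1 hev ht₀
    · rw [inf_principal_eq_bot]
      filter_upwards [h] with z hz hzZ
      exact hz hzZ.2
  have : Countable Z := by
    have : TopologicalSpace.SeparableSpace Z := by infer_instance
    exact (TopologicalSpace.separableSpace_iff_countable).1 this
  exact Set.countable_coe_iff.1 this

section Slice

variable {n : ℕ}

/-- The preimage of a convex set under the affine map `t ↦ p + t • v` is convex. -/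
theorem aux_convex_slice (p v : EuclideanSpace ℂ (Fin n)) {B : Set (EuclideanSpace ℂ (Fin n))}
    (hB : Convex ℝ B) : Convex ℝ ((fun t : ℂ => p + t • v) ⁻¹' B) := by
  intro x hx y hy a b haa hbb hab
  simp only [mem_preimage] at hx hy ⊢
  have e1 : (a • x + b • y) • v = a • (x • v) + b • (y • v) := by
    rw [_root_.add_smul, smul_assoc, smul_assoc]
  have e2 : a • (p + x • v) + b • (p + y • v)
      = (a • p + b • p) + (a • (x • v) + b • (y • v)) := by
    rw [smul_add, smul_add]; abel
  have key : p + (a • x + b • y) • v = a • (p + x • v) + b • (p + y • v) := by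
    rw [e1, e2, ← _root_.add_smul, hab, one_smul]
  rw [key]
  exact hB hx hy haa hbb hab

/-- Two points of a convex open set where a holomorphic function does not vanish can be joined
within the set minus the zero locus, by slicing along the complex line through them. -/
theorem aux_joined_convex {B : Set (EuclideanSpace ℂ (Fin n))} (hB : Convex ℝ B)
    (hBo : IsOpen B) {f : EuclideanSpace ℂ (Fin n) → ℂ} (hf : DifferentiableOn ℂ f B)
    {p q : EuclideanSpace ℂ (Fin n)} (hp : p ∈ B) (hq : q ∈ B)
    (hfp : f p ≠ 0) (hfq : f q ≠ 0) : JoinedIn {z | z ∈ B ∧ f z ≠ 0} p q := by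
  set v := q - p with hv
  set φ : ℂ → EuclideanSpace ℂ (Fin n) := fun t => p + t • v with hφ
  have hφcont : Continuous φ := by
    exact continuous_const.add (continuous_id.smul continuous_const)
  have hφdiff : Differentiable ℂ φ := by
    exact (differentiable_const _).add (differentiable_id.smul_const _)
  have hφ0 : φ 0 = p := by simp [φ]
  have hφ1 : φ 1 = q := by simp [φ, v]
  set S : Set ℂ := φ ⁻¹' B with hS
  have hSo : IsOpen S := hBo.preimage hφcont
  have hSconv : Convex ℝ S := aux_convex_slice p v hB
  have h0S : (0 : ℂ) ∈ S := by simp only [S, mem_preimage, hφ0]; exact hp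
  have h1S : (1 : ℂ) ∈ S := by simp only [S, mem_preimage, hφ1]; exact hq
  have hgdiff : DifferentiableOn ℂ (f ∘ φ) S :=
    hf.comp hφdiff.differentiableOn (fun x hx => hx)
  have hgan : AnalyticOnNhd ℂ (f ∘ φ) S := hgdiff.analyticOnNhd hSo
  have hg0 : (f ∘ φ) 0 ≠ 0 := by simp [hφ0, hfp]
  have hg1 : (f ∘ φ) 1 ≠ 0 := by simp [hφ1, hfq]
  set Z : Set ℂ := {t | t ∈ S ∧ (f ∘ φ) t = 0} with hZ
  have hZc : Z.Countable := aux_countable_zeros hSo hSconv.isPreconnected hgan h0S hg0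
  have hjoin : JoinedIn (S \ Z) 0 1 :=
    aux_joinedIn_convex_diff_countable hSconv hSo hZc
      ⟨h0S, fun h => hg0 h.2⟩ ⟨h1S, fun h => hg1 h.2⟩
  have := hjoin.map hφcont
  rw [hφ0, hφ1] at this
  apply this.mono
  rintro w ⟨t, ⟨htS, htZ⟩, rfl⟩
  exact ⟨htS, fun h => htZ ⟨htS, h⟩⟩

/-- Identity theorem on a convex open set, via slicing. -/
theorem aux_eqOn_zero_convex {B : Set (EuclideanSpace ℂ (Fin n))} (hB : Convex ℝ B)
    (hBo : IsOpen B) {f : EuclideanSpace ℂ (Fin n) → ℂ} (hf : DifferentiableOn ℂ f B)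
    {p : EuclideanSpace ℂ (Fin n)} (hp : p ∈ B) (h : ∀ᶠ x in 𝓝 p, f x = 0) :
    Set.EqOn f 0 B := by
  intro q hq
  set v := q - p with hv
  set φ : ℂ → EuclideanSpace ℂ (Fin n) := fun t => p + t • v with hφ
  have hφcont : Continuous φ := continuous_const.add (continuous_id.smul continuous_const)
  have hφdiff : Differentiable ℂ φ :=
    (differentiable_const _).add (differentiable_id.smul_const _)
  have hφ0 : φ 0 = p := by simp [φ]
  have hφ1 : φ 1 = q := by simp [φ, v]
  set S : Set ℂ := φ ⁻¹' B with hS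
  have hSo : IsOpen S := hBo.preimage hφcont
  have hSconv : Convex ℝ S := aux_convex_slice p v hB
  have h0S : (0 : ℂ) ∈ S := by simp only [S, mem_preimage, hφ0]; exact hp
  have h1S : (1 : ℂ) ∈ S := by simp only [S, mem_preimage, hφ1]; exact hq
  have hgan : AnalyticOnNhd ℂ (f ∘ φ) S :=
    (hf.comp hφdiff.differentiableOn (fun x hx => hx)).analyticOnNhd hSo
  have hev : (f ∘ φ) =ᶠ[𝓝 (0 : ℂ)] 0 := by
    have : Filter.Tendsto φ (𝓝 0) (𝓝 p) := by
      rw [← hφ0]; exact hφcont.continuousAt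
    filter_upwards [this.eventually h] with t ht using ht
  have := hgan.eqOn_zero_of_preconnected_of_eventuallyEq_zero hSconv.isPreconnected h0S hev
  have := this h1S
  simpa [hφ1] using this

end Slice

/-- Let `U ⊆ ℂⁿ` be a connected open set and `f : U → ℂ` holomorphic and
not identically zero on `U`. Then the open set `{z ∈ U | f z ≠ 0}` is dense in `U` and
connected. -/
theorem nonvanishing_locus_dense_connected {n : ℕ}
    {U : Set (EuclideanSpace ℂ (Fin n))} (hUopen : IsOpen U) (hUconn : IsConnected U)
    {f : EuclideanSpace ℂ (Fin n) → ℂ} (hf : DifferentiableOn ℂ f U)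
    (hne : ∃ z ∈ U, f z ≠ 0) :
    (∀ z ∈ U, z ∈ closure {w | w ∈ U ∧ f w ≠ 0}) ∧
      IsConnected {w | w ∈ U ∧ f w ≠ 0} := by
  set V := {w | w ∈ U ∧ f w ≠ 0} with hV
  -- global identity theorem, via clopen argument and the convex case
  have hglobal : ∀ z₀ ∈ U, (∀ᶠ x in 𝓝 z₀, f x = 0) → Set.EqOn f 0 U := by
    intro z₀ hz₀ hev
    set A := {z | z ∈ U ∧ ∀ᶠ x in 𝓝 z, f x = 0} with hA
    have hAopen : IsOpen A := by
      rw [isOpen_iff_mem_nhds]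
      rintro z ⟨hzU, hz⟩
      have : ∀ᶠ x in 𝓝 z, (∀ᶠ y in 𝓝 x, f y = 0) := hz.eventually_nhds
      filter_upwards [this, hUopen.mem_nhds hzU] with x hx hxU
      exact ⟨hxU, hx⟩
    have hCopen : IsOpen (U \ A) := by
      rw [isOpen_iff_mem_nhds]
      rintro z ⟨hzU, hzA⟩
      obtain ⟨r, hr, hball⟩ := Metric.isOpen_iff.1 hUopen z hzU
      have hkey : Metric.ball z (r / 2) ∩ A = ∅ := by
        rw [Set.eq_empty_iff_forall_notMem]
        rintro z' ⟨hz'ball, hz'U, hz'ev⟩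
        apply hzA
        refine ⟨hzU, ?_⟩
        have hz'int : z' ∈ Metric.ball z r :=
          Metric.ball_subset_ball (by linarith) hz'ball
        have heq : Set.EqOn f 0 (Metric.ball z r) :=
          aux_eqOn_zero_convex (convex_ball z r) Metric.isOpen_ball
            (hf.mono hball) hz'int hz'ev
        filter_upwards [Metric.isOpen_ball.mem_nhds (Metric.mem_ball_self hr)] with x hx
        exact heq hx
      filter_upwards [Metric.isOpen_ball.mem_nhds (Metric.mem_ball_self (by linarith : 0 < r/2)),
        hUopen.mem_nhds hzU] with x hx hxU
      refine ⟨hxU, fun hxA => ?_⟩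
      rw [Set.eq_empty_iff_forall_notMem] at hkey
      exact hkey x ⟨hx, hxA⟩
    have hsub : U ⊆ A := by
      apply hUconn.isPreconnected.subset_left_of_subset_union hAopen hCopen
      · exact Set.disjoint_left.2 fun x hx hx' => hx'.2 hx
      · intro z hz
        by_cases h : z ∈ A
        · exact Or.inl h
        · exact Or.inr ⟨hz, h⟩
      · exact ⟨z₀, hz₀, hz₀, hev⟩
    intro z hz
    exact ((hsub hz).2).self_of_nhds
  -- density
  have hdense : ∀ z ∈ U, z ∈ closure V := by
    intro z hz
    by_contra hcl
    rw [_root_.mem_closure_iff] at hcl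
    push_neg at hcl
    obtain ⟨o, ho, hzo, hoV⟩ := hcl
    obtain ⟨w, hwU, hwf⟩ := hne
    apply hwf
    have hev : ∀ᶠ x in 𝓝 z, f x = 0 := by
      filter_upwards [ho.mem_nhds hzo, hUopen.mem_nhds hz] with x hx hxU
      by_contra hfx
      rw [Set.eq_empty_iff_forall_notMem] at hoV
      exact hoV x ⟨hx, hxU, hfx⟩
    exact hglobal z hz hev hwU
  refine ⟨hdense, ?_⟩
  -- connectedness, via a clopen argument with local path-joining
  obtain ⟨p, hpU, hpf⟩ := hne
  have hpV : p ∈ V := ⟨hpU, hpf⟩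
  set A := {z | ∃ w, (w ∈ V ∧ JoinedIn V p w) ∧
      ∃ B : Set (EuclideanSpace ℂ (Fin n)), Convex ℝ B ∧ IsOpen B ∧ B ⊆ U ∧ z ∈ B ∧ w ∈ B}
    with hAdef
  -- joining two points of V inside a convex open subset of U
  have hloc : ∀ (B : Set (EuclideanSpace ℂ (Fin n))), Convex ℝ B → IsOpen B → B ⊆ U →
      ∀ x ∈ B, ∀ y ∈ B, f x ≠ 0 → f y ≠ 0 → JoinedIn V x y := by
    intro B hBc hBoo hBU x hx y hy hfx hfy
    have := aux_joined_convex hBc hBoo (hf.mono hBU) hx hy hfx hfy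
    exact this.mono fun w hw => ⟨hBU hw.1, hw.2⟩
  have hAopen : IsOpen A := by
    rw [isOpen_iff_mem_nhds]
    rintro z ⟨w, hw, B, hBc, hBo, hBU, hzB, hwB⟩
    filter_upwards [hBo.mem_nhds hzB] with x hx
    exact ⟨w, hw, B, hBc, hBo, hBU, hx, hwB⟩
  have hstep : ∀ z ∈ U, ∀ r > 0, Metric.ball z r ⊆ U → (Metric.ball z r ∩ A).Nonempty →
      z ∈ A := by
    rintro z hz r hr hball ⟨z', hz'ball, w, ⟨hwV, hjoin⟩, B', hB'c, hB'o, hB'U, hz'B', hwB'⟩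
    -- B' ∩ ball z r is an open neighborhood of z'; use density to find a point of V in it
    have hz'U : z' ∈ U := hball hz'ball
    have hopen : IsOpen (B' ∩ Metric.ball z r) := hB'o.inter Metric.isOpen_ball
    have hz'mem : z' ∈ B' ∩ Metric.ball z r := ⟨hz'B', hz'ball⟩
    obtain ⟨w₁, hw₁o, hw₁V⟩ :=
      _root_.mem_closure_iff.1 (hdense z' hz'U) _ hopen hz'mem
    -- join w to w₁ inside B'
    have hj1 : JoinedIn V w w₁ :=
      hloc B' hB'c hB'o hB'U w hwB' w₁ hw₁o.1 hwV.2 hw₁V.2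
    exact ⟨w₁, ⟨hw₁V, hjoin.trans hj1⟩, Metric.ball z r, convex_ball z r,
      Metric.isOpen_ball, hball, Metric.mem_ball_self hr, hw₁o.2⟩
  have hCopen : IsOpen (U \ A) := by
    rw [isOpen_iff_mem_nhds]
    rintro z ⟨hzU, hzA⟩
    obtain ⟨r, hr, hball⟩ := Metric.isOpen_iff.1 hUopen z hzU
    filter_upwards [Metric.isOpen_ball.mem_nhds (Metric.mem_ball_self (by linarith : 0 < r/2)),
      hUopen.mem_nhds hzU] with x hxball hxU
    refine ⟨hxU, fun hxA => hzA ?_⟩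
    exact hstep z hzU r hr hball ⟨x, Metric.ball_subset_ball (by linarith) hxball, hxA⟩
  have hpA : p ∈ A := by
    obtain ⟨r, hr, hball⟩ := Metric.isOpen_iff.1 hUopen p hpU
    exact ⟨p, ⟨hpV, JoinedIn.refl hpV⟩, Metric.ball p r, convex_ball p r, Metric.isOpen_ball,
      hball, Metric.mem_ball_self hr, Metric.mem_ball_self hr⟩
  have hsub : U ⊆ A := by
    apply hUconn.isPreconnected.subset_left_of_subset_union hAopen hCopen
    · exact Set.disjoint_left.2 fun x hx hx' => hx'.2 hx
    · intro z hz
      by_cases h : z ∈ A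
      · exact Or.inl h
      · exact Or.inr ⟨hz, h⟩
    · exact ⟨p, hpU, hpA⟩
  have hpath : IsPathConnected V := by
    refine ⟨p, hpV, fun {q} hq => ?_⟩
    obtain ⟨w, ⟨hwV, hjoin⟩, B, hBc, hBo, hBU, hqB, hwB⟩ := hsub hq.1
    exact hjoin.trans (hloc B hBc hBo hBU w hwB q hqB hwV.2 hq.2)
  exact hpath.isConnected
end

section
/- Let 𝔥 be a ℂ-linear subspace of ℂ^m such that the restriction to 𝔥 of the real-part projection Re : ℂ^m → ℝ^m is injective. Then the image exp(𝔥) of 𝔥 under the quotient homomorphism exp : ℂ^m → ℂ^m/ℤ^m is a closed subset (hence a closed subgroup) of the topological group ℂ^m/ℤ^m. -/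
/-- The real-part projection `ℂ^m → ℝ^m`, as an `ℝ`-linear map. -/
noncomputable def reLinear (m : ℕ) : (Fin m → ℂ) →ₗ[ℝ] (Fin m → ℝ) :=
  LinearMap.pi fun i => Complex.reLm.comp (LinearMap.proj (R := ℝ) i)

/-- The lattice `ℤ^m`, regarded as a (discrete) additive subgroup of `ℂ^m`. -/
noncomputable def intLattice (m : ℕ) : AddSubgroup (Fin m → ℂ) where
  carrier := {z | ∀ i, ∃ k : ℤ, z i = (k : ℂ)}
  zero_mem' := fun i => ⟨0, by simp⟩
  add_mem' := by
    intro a b ha hb i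
    obtain ⟨k, hk⟩ := ha i
    obtain ⟨l, hl⟩ := hb i
    exact ⟨k + l, by simp [Pi.add_apply, hk, hl]⟩
  neg_mem' := by
    intro a ha i
    obtain ⟨k, hk⟩ := ha i
    exact ⟨-k, by simp [Pi.neg_apply, hk]⟩

/-- The imaginary-part projection `ℂ^m → ℝ^m`, as an `ℝ`-linear map. -/
noncomputable def imLinear (m : ℕ) : (Fin m → ℂ) →ₗ[ℝ] (Fin m → ℝ) :=
  LinearMap.pi fun i => Complex.imLm.comp (LinearMap.proj (R := ℝ) i)

lemma intLattice_isClosed (m : ℕ) : IsClosed ((intLattice m : Set (Fin m → ℂ))) := by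
  have : (intLattice m : Set (Fin m → ℂ)) =
      ⋂ i, (fun z : Fin m → ℂ => z i) ⁻¹' (Set.range ((↑) : ℤ → ℂ)) := by
    ext z
    simp only [Set.mem_iInter, Set.mem_preimage, Set.mem_range]
    constructor
    · intro hz i; obtain ⟨k, hk⟩ := hz i; exact ⟨k, hk.symm⟩
    · intro hz i; obtain ⟨k, hk⟩ := hz i; exact ⟨k, hk.symm⟩
  rw [this]
  exact isClosed_iInter fun i =>
    Complex.isClosed_range_intCast.preimage (continuous_apply i)

lemma imLinear_of_lattice {m : ℕ} {k : Fin m → ℂ} (hk : k ∈ intLattice m) :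
    imLinear m k = 0 := by
  funext i
  obtain ⟨n, hn⟩ := hk i
  simp [imLinear, hn]

/-- Let `𝔥` be a `ℂ`-linear subspace of `ℂ^m` such that the restriction
to `𝔥` of the real-part projection `Re : ℂ^m → ℝ^m` is injective. Then the image
`exp(𝔥)` of `𝔥` under the quotient homomorphism `exp : ℂ^m → ℂ^m/ℤ^m` is a closed subset
of the topological group `ℂ^m/ℤ^m`. -/
theorem image_closed_in_complexTorus {m : ℕ} (𝔥 : Submodule ℂ (Fin m → ℂ))
    (hre : Set.InjOn (reLinear m) (𝔥 : Set (Fin m → ℂ))) :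
    IsClosed ((QuotientAddGroup.mk : (Fin m → ℂ) → (Fin m → ℂ) ⧸ intLattice m) ''
      (𝔥 : Set (Fin m → ℂ))) := by
  classical
  -- the restriction of Im to 𝔥 as an ℝ-linear map
  set V : Submodule ℝ (Fin m → ℂ) := 𝔥.restrictScalars ℝ with hV
  set f : V →ₗ[ℝ] (Fin m → ℝ) := (imLinear m).comp V.subtype with hf
  -- Im is injective on 𝔥
  have hker : LinearMap.ker f = ⊥ := by
    rw [LinearMap.ker_eq_bot']
    rintro ⟨z, hz⟩ hz0
    have hz𝔥 : z ∈ 𝔥 := hz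
    have hIz : Complex.I • z ∈ 𝔥 := 𝔥.smul_mem _ hz𝔥
    have hre0 : reLinear m (Complex.I • z) = reLinear m 0 := by
      funext i
      have : imLinear m z i = 0 := congrFun (by simpa [hf] using hz0) i
      simp only [reLinear, LinearMap.pi_apply, LinearMap.comp_apply, LinearMap.proj_apply,
        Pi.smul_apply, smul_eq_mul, Complex.reLm_coe, map_zero, Pi.zero_apply]
      have h0 : (z i).im = 0 := by
        simpa [imLinear] using this
      simp [Complex.mul_re, h0]
    have := hre hIz (𝔥.zero_mem) hre0
    have hz' : z = 0 := by
      have := smul_eq_zero.mp this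
      rcases this with h | h
      · exact absurd h Complex.I_ne_zero
      · exact h
    exact Subtype.ext hz'
  have ce : Topology.IsClosedEmbedding f := f.isClosedEmbedding_of_injective hker
  -- the saturation of 𝔥 is closed
  set T : Set (Fin m → ℂ) := {x | ∃ z ∈ 𝔥, x - z ∈ intLattice m} with hT
  have hTclosed : IsClosed T := by
    apply IsSeqClosed.isClosed
    intro u p hu hup
    choose z hz hk using hu
    have him : ∀ n, imLinear m (u n) = f ⟨z n, hz n⟩ := by
      intro n
      have : imLinear m (u n - z n) = 0 := imLinear_of_lattice (hk n)
      have h' : imLinear m (u n) - imLinear m (z n) = 0 := by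
        simpa [map_sub] using this
      simp [hf, sub_eq_zero.mp h']
    have hcont : Continuous (imLinear m) := (imLinear m).continuous_of_finiteDimensional
    have htend : Filter.Tendsto (fun n => f ⟨z n, hz n⟩) Filter.atTop
        (nhds (imLinear m p)) := by
      simpa [Function.comp_def, fun n => (him n).symm] using (hcont.continuousAt.tendsto.comp hup)
    have hmem : imLinear m p ∈ Set.range f :=
      ce.isClosed_range.mem_of_tendsto htend (Filter.Eventually.of_forall fun n => ⟨_, rfl⟩)
    obtain ⟨zl, hzl⟩ := hmem
    have hzt : Filter.Tendsto (fun n => (⟨z n, hz n⟩ : V)) Filter.atTop (nhds zl) := by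
      rw [ce.isEmbedding.isInducing.tendsto_nhds_iff]
      simpa [hzl, Function.comp_def] using htend
    have hzt' : Filter.Tendsto (fun n => z n) Filter.atTop (nhds (zl : Fin m → ℂ)) :=
      (continuous_subtype_val.continuousAt.tendsto.comp hzt)
    have hkt : Filter.Tendsto (fun n => u n - z n) Filter.atTop
        (nhds (p - (zl : Fin m → ℂ))) := hup.sub hzt'
    have hlat : p - (zl : Fin m → ℂ) ∈ intLattice m :=
      (intLattice_isClosed m).mem_of_tendsto hkt (Filter.Eventually.of_forall hk)
    exact ⟨(zl : Fin m → ℂ), zl.2, hlat⟩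
  -- conclude via the quotient map
  have hq := QuotientAddGroup.isQuotientMap_mk (intLattice m)
  rw [← hq.isClosed_preimage]
  have hpre : (QuotientAddGroup.mk : (Fin m → ℂ) → (Fin m → ℂ) ⧸ intLattice m) ⁻¹'
      (QuotientAddGroup.mk '' (𝔥 : Set (Fin m → ℂ))) = T := by
    ext x
    simp only [Set.mem_preimage, Set.mem_image, hT, Set.mem_setOf_eq]
    constructor
    · rintro ⟨z, hz, hxz⟩
      refine ⟨z, hz, ?_⟩
      have := (QuotientAddGroup.eq (s := intLattice m)).mp hxz.symm
      simpa [neg_add_eq_sub, ← sub_eq_neg_add] using (intLattice m).neg_mem this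
    · rintro ⟨z, hz, hxz⟩
      refine ⟨z, hz, ?_⟩
      exact ((QuotientAddGroup.eq (s := intLattice m)).mpr
        (by simpa [neg_add_eq_sub, ← sub_eq_neg_add] using (intLattice m).neg_mem hxz)).symm
  rw [hpre]
  exact hTclosed
end

section
/- Let 𝔥 be a ℂ-linear subspace of ℂ^m such that Re restricted to 𝔥 is injective, let I be a finite index set, and let λᵢ ∈ ℤ^m (i ∈ I) be vectors whose images under the quotient map q : ℝ^m → ℝ^m/Re(𝔥) are linearly independent over ℝ. If h ∈ 𝔥 and cᵢ ∈ ℂ (i ∈ I) satisfy h − Σ_{i∈I} cᵢλᵢ ∈ ℤ^m (viewing ℤ^m ⊆ ℝ^m ⊆ ℂ^m), then h = 0 and Σ_{i∈I} cᵢλᵢ ∈ ℤ^m. Equivalently, in the quotient group ℂ^m/ℤ^m the images of 𝔥 and of the ℂ-linear span of { λᵢ : i ∈ I } intersect only in the identity element. -/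
/-- `Re(𝔥)`, the image of a complex subspace `𝔥 ⊆ ℂ^m` under the real-part projection,
as a real subspace of `ℝ^m`. -/
noncomputable def reSub {m : ℕ} (𝔥 : Submodule ℂ (Fin m → ℂ)) : Submodule ℝ (Fin m → ℝ) :=
  (𝔥.restrictScalars ℝ).map (reLinear m)

/-- Let `𝔥` be a `ℂ`-linear subspace of `ℂ^m` with `Re` injective on `𝔥`,
let `I` be a finite index set and `λᵢ ∈ ℤ^m` vectors whose images under the quotient map
`q : ℝ^m → ℝ^m/Re(𝔥)` are linearly independent over `ℝ`. If `h ∈ 𝔥` and `cᵢ ∈ ℂ` satisfy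
`h − Σᵢ cᵢ λᵢ ∈ ℤ^m`, then `h = 0` and `Σᵢ cᵢ λᵢ ∈ ℤ^m`. -/
theorem subspace_meets_subtorus_trivially {m : ℕ} {ι : Type*} [Fintype ι]
    (𝔥 : Submodule ℂ (Fin m → ℂ))
    (hre : Set.InjOn (reLinear m) (𝔥 : Set (Fin m → ℂ)))
    (lam : ι → Fin m → ℤ)
    (hind : LinearIndependent ℝ fun i => (reSub 𝔥).mkQ fun j => ((lam i j : ℤ) : ℝ))
    (h : Fin m → ℂ) (hh : h ∈ 𝔥) (c : ι → ℂ)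
    (hmem : ∀ j, ∃ k : ℤ,
      (h - ∑ i, c i • fun j' => ((lam i j' : ℤ) : ℂ)) j = (k : ℂ)) :
    h = 0 ∧ ∀ j, ∃ k : ℤ, (∑ i, c i • fun j' => ((lam i j' : ℤ) : ℂ)) j = (k : ℂ) := by
  -- imaginary parts
  have him : ∀ j, (h j).im = ∑ i, (c i).im * (lam i j : ℝ) := by
    intro j
    obtain ⟨k, hk⟩ := hmem j
    have := congrArg Complex.im hk
    simp [Finset.sum_apply, Pi.smul_apply, smul_eq_mul, Complex.sub_im, Complex.im_sum,
      Complex.mul_im] at this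
    linarith [this]
  -- v = Im h lies in reSub 𝔥
  set v : Fin m → ℝ := fun j => (h j).im with hv
  have hvmem : v ∈ reSub 𝔥 := by
    refine ⟨(-Complex.I) • h, ?_, ?_⟩
    · exact Submodule.smul_mem _ _ hh
    · funext j
      simp [reLinear, v, Complex.mul_re]
  have hvsum : v = ∑ i, (c i).im • (fun j => ((lam i j : ℤ) : ℝ)) := by
    funext j
    simp [v, him j, Finset.sum_apply]
  have hq : ∑ i, (c i).im • ((reSub 𝔥).mkQ fun j => ((lam i j : ℤ) : ℝ)) = 0 := by
    have : (reSub 𝔥).mkQ v = 0 := (Submodule.Quotient.mk_eq_zero _).2 hvmem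
    rw [hvsum] at this
    simpa [map_sum, map_smul] using this
  have hc0 : ∀ i, (c i).im = 0 :=
    (Fintype.linearIndependent_iff.1 hind) _ hq
  have hv0 : ∀ j, (h j).im = 0 := by
    intro j
    simp [him j, hc0]
  have hIh : Complex.I • h = 0 := by
    apply hre (Submodule.smul_mem _ _ hh) (Submodule.zero_mem _)
    funext j
    simp [reLinear, Complex.mul_re, hv0 j]
  have hh0 : h = 0 := by
    have := smul_eq_zero.1 hIh
    simpa [Complex.I_ne_zero] using this
  refine ⟨hh0, fun j => ?_⟩
  obtain ⟨k, hk⟩ := hmem j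
  refine ⟨-k, ?_⟩
  have : (h - ∑ i, c i • fun j' => ((lam i j' : ℤ) : ℂ)) j
      = h j - (∑ i, c i • fun j' => ((lam i j' : ℤ) : ℂ)) j := rfl
  rw [this, hh0, Pi.zero_apply, zero_sub] at hk
  push_cast at hk ⊢
  linear_combination -hk
end

section
/- Let 𝔥 be a ℂ-linear subspace of ℂ^m such that Re restricted to 𝔥 is injective, and let 𝔣 ⊆ ℝ^m be a real subspace such that the quotient map q : ℝ^m → ℝ^m/Re(𝔥) restricts to a bijection from 𝔣 onto ℝ^m/Re(𝔥). Then ℂ^m is the internal direct sum of real subspaces ℝ^m ⊕ √−1·𝔣 ⊕ 𝔥: every w ∈ ℂ^m can be written uniquely as w = u + √−1·v + h with u ∈ ℝ^m, v ∈ 𝔣, and h ∈ 𝔥. -/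
lemma reLinear_apply {m : ℕ} (x : Fin m → ℂ) (j : Fin m) : reLinear m x j = (x j).re := rfl

/-- Let `𝔥` be a complex subspace of `ℂ^m` with `Re` injective on `𝔥`, and
let `𝔣 ⊆ ℝ^m` be a real subspace such that the quotient map `q : ℝ^m → ℝ^m/Re(𝔥)` restricts
to a bijection from `𝔣` onto `ℝ^m/Re(𝔥)`. Then `ℂ^m = ℝ^m ⊕ √−1·𝔣 ⊕ 𝔥` as an internal
direct sum of real subspaces: every `w ∈ ℂ^m` is uniquely `w = u + √−1·v + h` with
`u ∈ ℝ^m`, `v ∈ 𝔣`, `h ∈ 𝔥`. -/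
theorem decomposition_real_if_fan {m : ℕ} (𝔥 : Submodule ℂ (Fin m → ℂ))
    (hre : Set.InjOn (reLinear m) (𝔥 : Set (Fin m → ℂ)))
    (𝔣 : Submodule ℝ (Fin m → ℝ))
    (hbij : Function.Bijective ((reSub 𝔥).mkQ.comp 𝔣.subtype)) :
    ∀ w : Fin m → ℂ, ∃! uvh : (Fin m → ℝ) × (Fin m → ℝ) × (Fin m → ℂ),
      uvh.2.1 ∈ 𝔣 ∧ uvh.2.2 ∈ 𝔥 ∧
      w = (fun j => ((uvh.1 j : ℝ) : ℂ)) + (fun j => Complex.I * ((uvh.2.1 j : ℝ) : ℂ))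
            + uvh.2.2 := by
  intro w
  set b : Fin m → ℝ := fun j => (w j).im with hb
  -- key injectivity : Im injective on 𝔥 (via Re)
  have him_inj : ∀ h₁ ∈ 𝔥, ∀ h₂ ∈ 𝔥, (∀ j, (h₁ j).im = (h₂ j).im) → h₁ = h₂ := by
    intro h₁ hm₁ h₂ hm₂ heq
    have key : Complex.I • h₁ = Complex.I • h₂ := by
      apply hre (𝔥.smul_mem _ hm₁) (𝔥.smul_mem _ hm₂)
      funext j
      simp [reLinear_apply, Pi.smul_apply, Complex.mul_re, heq j]
    exact smul_right_injective (Fin m → ℂ) Complex.I_ne_zero key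
  obtain ⟨⟨v, hv⟩, hveq⟩ := hbij.2 ((reSub 𝔥).mkQ b)
  simp only [LinearMap.comp_apply, Submodule.subtype_apply] at hveq
  have hsub : v - b ∈ reSub 𝔥 := by
    rwa [Submodule.mkQ_apply, Submodule.mkQ_apply, Submodule.Quotient.eq] at hveq
  obtain ⟨h0, hh0, hre0⟩ := hsub
  have hre0' : ∀ j, (h0 j).re = v j - b j := fun j => congrFun hre0 j
  set h : Fin m → ℂ := -(Complex.I • h0) with hdef
  have hmem : h ∈ 𝔥 := neg_mem (𝔥.smul_mem _ hh0)
  have him : ∀ j, (h j).im = b j - v j := by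
    intro j
    simp [hdef, Complex.mul_im, hre0' j]
  set u : Fin m → ℝ := fun j => (w j).re - (h j).re with hu
  refine ⟨(u, v, h), ⟨hv, hmem, ?_⟩, ?_⟩
  · funext j
    apply Complex.ext
    · simp [hu]
    · simp [him j, hb]
  · rintro ⟨u', v', h'⟩ ⟨hv', hh', heq⟩
    have hre' : ∀ j, (w j).re = u' j + (h' j).re := by
      intro j
      have := congrFun heq j
      rw [this]; simp
    have him' : ∀ j, (w j).im = v' j + (h' j).im := by
      intro j
      have := congrFun heq j
      rw [this]; simp
    -- first, v' = v
    have hmk : (reSub 𝔥).mkQ v' = (reSub 𝔥).mkQ b := by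
      rw [Submodule.mkQ_apply, Submodule.mkQ_apply, Submodule.Quotient.eq]
      refine ⟨Complex.I • h', 𝔥.smul_mem _ hh', ?_⟩
      funext j
      have := him' j
      simp only [reLinear_apply, Pi.smul_apply, smul_eq_mul, Complex.mul_re,
        Complex.I_re, Complex.I_im, Pi.sub_apply, zero_mul, one_mul, zero_sub]
      show -(h' j).im = v' j - (w j).im
      linarith
    have hvv : v' = v := by
      have : ((reSub 𝔥).mkQ.comp 𝔣.subtype) ⟨v', hv'⟩ =
          ((reSub 𝔥).mkQ.comp 𝔣.subtype) ⟨v, hv⟩ := by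
        simp only [LinearMap.comp_apply, Submodule.subtype_apply]
        rw [hmk, ← hveq]
      exact congrArg Subtype.val (hbij.1 this)
    have hhh : h' = h := by
      apply him_inj h' hh' h hmem
      intro j
      rw [him j, ← hvv]
      have := him' j
      show (h' j).im = (w j).im - v' j
      linarith
    have huu : u' = u := by
      funext j
      have := hre' j
      rw [hu]
      simp [← hhh, this]
    simp [huu, hvv, hhh]
end

section
/- Let d be a positive integer and let ρ : (ℝ/ℤ)^d → GL(ℝ^{2d}) be an injective continuous group homomorphism (i.e. a faithful real 2d-dimensional representation of the compact d-dimensional torus). Then the subspace of common fixed vectors { v ∈ ℝ^{2d} : ρ(g) v = v for all g ∈ (ℝ/ℤ)^d } is the zero subspace. -/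
open Complex Finset Matrix

noncomputable section
namespace TorusRepAux

/-- primitive cube root of unity -/
def ω : ℂ := Complex.exp (2 * Real.pi * Complex.I / (3 : ℕ))

lemma hω : IsPrimitiveRoot ω 3 := Complex.isPrimitiveRoot_exp 3 (by norm_num)

/-- character value attached to `a : ZMod 3` -/
def ze (a : ZMod 3) : ℂ := ω ^ a.val

lemma ze_zero : ze 0 = 1 := by simp [ze, ZMod.val_zero]

lemma ω_pow_mod (k : ℕ) : ω ^ (k % 3) = ω ^ k := by
  conv_rhs => rw [← Nat.div_add_mod k 3]
  rw [pow_add, pow_mul, hω.pow_eq_one, one_pow, one_mul]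

lemma ze_add (a b : ZMod 3) : ze (a + b) = ze a * ze b := by
  rw [ze, ze, ze, ← pow_add, ZMod.val_add, ω_pow_mod]

lemma ze_neg_mul (a : ZMod 3) : ze (-a) * ze a = 1 := by
  rw [← ze_add, neg_add_cancel, ze_zero]

lemma ze_ne_one {a : ZMod 3} (ha : a ≠ 0) : ze a ≠ 1 := by
  have hv : a.val = 1 ∨ a.val = 2 := by
    have h3 : a.val < 3 := a.val_lt
    have h0 : a.val ≠ 0 := fun h => ha (by rwa [ZMod.val_eq_zero] at h)
    omega
  rcases hv with h | h <;> rw [ze, h]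
  · exact hω.pow_ne_one_of_pos_of_lt (l := 1) (by norm_num) (by norm_num)
  · exact hω.pow_ne_one_of_pos_of_lt (l := 2) (by norm_num) (by norm_num)

lemma ze_conj (a : ZMod 3) : (starRingEnd ℂ) (ze a) = ze (-a) := by
  have h1 : (starRingEnd ℂ) ω = ω⁻¹ := by
    rw [ω, ← Complex.exp_conj, ← Complex.exp_neg]
    congr 1
    simp only [map_div₀, _root_.map_mul, Complex.conj_I, map_ofNat, map_natCast, Complex.conj_ofReal]
    ring
  rw [ze, map_pow, h1, inv_pow]
  exact inv_eq_of_mul_eq_one_left (ze_neg_mul a)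

variable {d : ℕ}

/-- the pairing on `(ZMod 3)^d` -/
def pr (n g : Fin d → ZMod 3) : ZMod 3 := ∑ i, n i * g i

lemma pr_comm (n g : Fin d → ZMod 3) : pr n g = pr g n := by
  simp [pr, mul_comm]

lemma pr_add_right (n g h : Fin d → ZMod 3) : pr n (g + h) = pr n g + pr n h := by
  simp [pr, mul_add, Finset.sum_add_distrib]

lemma pr_zero_left (g : Fin d → ZMod 3) : pr 0 g = 0 := by simp [pr]

lemma pr_neg_left (n g : Fin d → ZMod 3) : pr (-n) g = - pr n g := by
  simp [pr, Finset.sum_neg_distrib]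

lemma pr_sub_left (n m g : Fin d → ZMod 3) : pr (n - m) g = pr n g - pr m g := by
  simp [pr, sub_mul, Finset.sum_sub_distrib]

lemma pr_smul_right (n g : Fin d → ZMod 3) (c : ZMod 3) :
    pr n (c • g) = c * pr n g := by
  simp [pr, Finset.mul_sum]; congr 1; funext i; ring

/-- orthogonality of characters -/
lemma sum_ze_pr (n : Fin d → ZMod 3) :
    ∑ g : Fin d → ZMod 3, ze (pr n g) = if n = 0 then (3 : ℂ) ^ d else 0 := by
  by_cases hn : n = 0
  · simp [hn, pr_zero_left, ze_zero, Finset.card_univ]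
  · simp only [hn, if_false]
    obtain ⟨i₀, hi₀⟩ : ∃ i, n i ≠ 0 := by
      by_contra h
      push_neg at h
      exact hn (funext h)
    set g₀ : Fin d → ZMod 3 := Pi.single i₀ 1 with hg₀
    have hpr : pr n g₀ = n i₀ := by
      rw [pr]
      rw [Finset.sum_eq_single i₀]
      · simp [hg₀]
      · intro b _ hb; simp [hg₀, Pi.single_eq_of_ne hb]
      · simp
    have hc : ze (pr n g₀) ≠ 1 := by rw [hpr]; exact ze_ne_one hi₀
    set S := ∑ g : Fin d → ZMod 3, ze (pr n g) with hS
    have key : ze (pr n g₀) * S = S := by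
      rw [hS, Finset.mul_sum]
      refine Fintype.sum_equiv (Equiv.addLeft g₀) _ _ ?_
      intro g
      simp only [Equiv.coe_addLeft]
      rw [pr_add_right, ze_add]
    have : (ze (pr n g₀) - 1) * S = 0 := by ring_nf; rw [mul_comm] at key ⊢; linear_combination key
    rcases mul_eq_zero.mp this with h | h
    · exact absurd (by linear_combination h) hc
    · exact h

lemma pr_neg_right (n g : Fin d → ZMod 3) : pr n (-g) = - pr n g := by
  simp [pr, Finset.sum_neg_distrib]

lemma ze_mul_ze_neg (a : ZMod 3) : ze a * ze (-a) = 1 := by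
  rw [mul_comm]; exact ze_neg_mul a

lemma three_pow_ne_zero (d : ℕ) : ((3 : ℂ) ^ d) ≠ 0 := pow_ne_zero _ (by norm_num)

section Proj

set_option linter.unusedSectionVars false

variable {ι : Type*} [Fintype ι] [DecidableEq ι]
variable (σ : (Fin d → ZMod 3) → Matrix ι ι ℂ)

/-- Fourier projector attached to the character `n` -/
def Pj (n : Fin d → ZMod 3) : Matrix ι ι ℂ :=
  ((3 : ℂ) ^ d)⁻¹ • ∑ g : Fin d → ZMod 3, ze (- pr n g) • σ g

lemma Pj_def (n : Fin d → ZMod 3) :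
    Pj σ n = ((3 : ℂ) ^ d)⁻¹ • ∑ g : Fin d → ZMod 3, ze (- pr n g) • σ g := rfl

lemma mul_Pj (hmul : ∀ g h, σ (g + h) = σ g * σ h) (h n : Fin d → ZMod 3) :
    σ h * Pj σ n = ze (pr n h) • Pj σ n := by
  rw [Pj_def, Matrix.mul_smul, Matrix.mul_sum, smul_comm (ze (pr n h)) (((3 : ℂ) ^ d)⁻¹)]
  congr 1
  rw [Finset.smul_sum]
  refine Fintype.sum_equiv (Equiv.addLeft h) _ _ ?_
  intro x
  simp only [Equiv.coe_addLeft, Matrix.mul_smul, ← hmul, smul_smul]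
  congr 1
  rw [pr_add_right, neg_add, ze_add, ← mul_assoc, ze_mul_ze_neg, one_mul]

lemma sigma_comm (hmul : ∀ g h, σ (g + h) = σ g * σ h) (g h : Fin d → ZMod 3) :
    σ g * σ h = σ h * σ g := by
  rw [← hmul, ← hmul, add_comm]

lemma Pj_mul (hmul : ∀ g h, σ (g + h) = σ g * σ h) (h n : Fin d → ZMod 3) :
    Pj σ n * σ h = ze (pr n h) • Pj σ n := by
  rw [← mul_Pj σ hmul h n, Pj_def, Matrix.smul_mul, Matrix.mul_smul]
  congr 1
  rw [Matrix.sum_mul, Matrix.mul_sum]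
  refine Finset.sum_congr rfl fun g _ => ?_
  rw [Matrix.smul_mul, Matrix.mul_smul, sigma_comm σ hmul]

lemma Pj_mul_Pj (hmul : ∀ g h, σ (g + h) = σ g * σ h) (n m : Fin d → ZMod 3) :
    Pj σ n * Pj σ m = if n = m then Pj σ n else 0 := by
  have expand : Pj σ n * Pj σ m
      = ((3 : ℂ) ^ d)⁻¹ • ∑ g : Fin d → ZMod 3, ze (- pr m g) • (Pj σ n * σ g) := by
    rw [Pj_def σ m, Matrix.mul_smul, Matrix.mul_sum]
    congr 1
    exact Finset.sum_congr rfl fun g _ => (Matrix.mul_smul _ _ _)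
  rw [expand]
  have step : ∀ g : Fin d → ZMod 3,
      ze (- pr m g) • (Pj σ n * σ g) = ze (pr (n - m) g) • Pj σ n := by
    intro g
    rw [Pj_mul σ hmul g n, smul_smul, pr_sub_left, sub_eq_add_neg, ze_add]
    congr 1
    rw [mul_comm, ← pr_neg_left]
  simp only [step, ← Finset.sum_smul]
  rw [sum_ze_pr (n - m)]
  by_cases hnm : n = m
  · subst hnm
    rw [if_pos (sub_self n), if_pos rfl, smul_smul, inv_mul_cancel₀ (three_pow_ne_zero d),
      one_smul]
  · have h1 : n - m ≠ 0 := sub_ne_zero_of_ne hnm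
    simp [h1, hnm]

lemma sum_Pj (hone : σ 0 = 1) : ∑ n : Fin d → ZMod 3, Pj σ n = 1 := by
  have e1 : ∑ n : Fin d → ZMod 3, Pj σ n
      = ((3 : ℂ) ^ d)⁻¹ • ∑ g : Fin d → ZMod 3,
          (∑ n : Fin d → ZMod 3, ze (- pr n g)) • σ g := by
    rw [Finset.smul_sum]
    simp only [Pj_def, ← Finset.smul_sum]
    congr 1
    rw [Finset.sum_comm]
    exact Finset.sum_congr rfl fun g _ => (Finset.sum_smul).symm
  rw [e1]
  have e2 : ∀ g : Fin d → ZMod 3,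
      (∑ n : Fin d → ZMod 3, ze (- pr n g)) = if g = 0 then (3 : ℂ) ^ d else 0 := by
    intro g
    have h3 : ∀ n : Fin d → ZMod 3, ze (- pr n g) = ze (pr (-g) n) := by
      intro n; rw [← pr_neg_right, pr_comm]
    simp only [h3]
    rw [sum_ze_pr (-g)]
    simp [neg_eq_zero]
  simp only [e2, ite_smul, zero_smul]
  rw [Finset.sum_ite_eq' Finset.univ (0 : Fin d → ZMod 3)]
  simp [hone, smul_smul, inv_mul_cancel₀ (three_pow_ne_zero d)]

lemma Pj_neg_apply (hreal : ∀ g i j, (starRingEnd ℂ) (σ g i j) = σ g i j)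
    (n : Fin d → ZMod 3) (i j : ι) :
    Pj σ (-n) i j = (starRingEnd ℂ) (Pj σ n i j) := by
  rw [Pj_def, Pj_def, Matrix.smul_apply, Matrix.smul_apply, smul_eq_mul, smul_eq_mul, _root_.map_mul]
  congr 1
  · rw [map_inv₀, map_pow, map_ofNat]
  · rw [Matrix.sum_apply, Matrix.sum_apply, map_sum]
    refine Finset.sum_congr rfl fun g _ => ?_
    rw [Matrix.smul_apply, Matrix.smul_apply, smul_eq_mul, smul_eq_mul, _root_.map_mul,
      ze_conj, hreal, pr_neg_left, neg_neg]

end Proj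
section Core

set_option linter.unusedSectionVars false

variable {ι : Type*} [Fintype ι] [DecidableEq ι]

lemma sum_mulVec' {α : Type*} (s : Finset α) (A : α → Matrix ι ι ℂ) (v : ι → ℂ) :
    (∑ g ∈ s, A g) *ᵥ v = ∑ g ∈ s, A g *ᵥ v := by
  funext i
  rw [Finset.sum_apply]
  simp only [Matrix.mulVec, dotProduct, Matrix.sum_apply, Finset.sum_mul]
  exact Finset.sum_comm

lemma zmod3_eq_neg_self (a : ZMod 3) (h : a = -a) : a = 0 := by revert h; revert a; decide

lemma core {d : ℕ} (hcard : Fintype.card ι ≤ 2 * d)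
    (σ : (Fin d → ZMod 3) → Matrix ι ι ℂ)
    (hone : σ 0 = 1) (hmul : ∀ g h, σ (g + h) = σ g * σ h)
    (hreal : ∀ g i j, (starRingEnd ℂ) (σ g i j) = σ g i j)
    (hinj : ∀ g, σ g = 1 → g = 0)
    (v : ι → ℂ) (hv : v ≠ 0) (hfix : ∀ g, σ g *ᵥ v = v) : False := by
  classical
  set S : Finset (Fin d → ZMod 3) := Finset.univ.filter (fun n => Pj σ n ≠ 0) with hS
  -- `0 ∈ S`
  have hP0v : Pj σ 0 *ᵥ v = v := by
    rw [Pj_def, Matrix.smul_mulVec, sum_mulVec']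
    have e0 : ∀ g : Fin d → ZMod 3, (ze (- pr 0 g) • σ g) *ᵥ v = v := by
      intro g
      rw [pr_zero_left, neg_zero, ze_zero, one_smul, hfix]
    simp only [e0]
    rw [Finset.sum_const, Finset.card_univ, Fintype.card_fun, Fintype.card_fin, ZMod.card,
      ← Nat.cast_smul_eq_nsmul ℂ, smul_smul]
    push_cast
    rw [inv_mul_cancel₀ (three_pow_ne_zero d), one_smul]
  have hS0 : (0 : Fin d → ZMod 3) ∈ S := by
    rw [hS, Finset.mem_filter]
    refine ⟨Finset.mem_univ _, fun h0 => hv ?_⟩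
    rw [← hP0v, h0, Matrix.zero_mulVec]
  -- `S` is closed under negation
  have hSneg : ∀ n ∈ S, -n ∈ S := by
    intro n hn
    rw [hS, Finset.mem_filter] at hn ⊢
    refine ⟨Finset.mem_univ _, fun h0 => hn.2 ?_⟩
    ext i j
    have h1 := Pj_neg_apply σ hreal n i j
    rw [h0] at h1
    simp only [Matrix.zero_apply, starRingEnd_apply] at h1 ⊢
    exact (star_eq_zero.mp h1.symm)
  -- characters in `S` separate points
  have key1 : ∀ g : Fin d → ZMod 3, (∀ n ∈ S, pr n g = 0) → g = 0 := by
    intro g hg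
    apply hinj
    have e1 : σ g = ∑ n : Fin d → ZMod 3, ze (pr n g) • Pj σ n := by
      calc σ g = σ g * 1 := (mul_one _).symm
        _ = σ g * ∑ n : Fin d → ZMod 3, Pj σ n := by rw [sum_Pj σ hone]
        _ = ∑ n : Fin d → ZMod 3, σ g * Pj σ n := Matrix.mul_sum _ _ _
        _ = _ := Finset.sum_congr rfl fun n _ => mul_Pj σ hmul g n
    rw [e1, ← sum_Pj σ hone]
    refine Finset.sum_congr rfl fun n _ => ?_
    by_cases hn : n ∈ S
    · rw [hg n hn, ze_zero, one_smul]
    · have : Pj σ n = 0 := by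
        rw [hS, Finset.mem_filter] at hn
        push_neg at hn
        exact hn (Finset.mem_univ _)
      rw [this, smul_zero]
  -- |S| ≤ card ι via linear independence of columns of the projectors
  have hScard : S.card ≤ Fintype.card ι := by
    have hw : ∀ n : {x // x ∈ S}, ∃ j : ι, (fun i => Pj σ n.1 i j) ≠ 0 := by
      rintro ⟨n, hn⟩
      rw [hS, Finset.mem_filter] at hn
      by_contra hcon
      push_neg at hcon
      refine hn.2 ?_
      ext i j
      have := congrFun (hcon j) i
      simpa using this
    choose jn hjn using hw
    set w : {x // x ∈ S} → (ι → ℂ) := fun n => fun i => Pj σ n.1 i (jn n) with hwdef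
    have hPw : ∀ (m n : {x // x ∈ S}),
        Pj σ m.1 *ᵥ w n = if m.1 = n.1 then w n else 0 := by
      intro m n
      have h1 : Pj σ m.1 *ᵥ w n = fun i => (Pj σ m.1 * Pj σ n.1) i (jn n) := by
        funext i
        simp only [Matrix.mulVec, dotProduct, Matrix.mul_apply, hwdef]
      rw [h1, Pj_mul_Pj σ hmul]
      by_cases hmn : m.1 = n.1
      · rw [if_pos hmn, if_pos hmn, hmn]
      · rw [if_neg hmn, if_neg hmn]
        funext i
        simp
    have hli : LinearIndependent ℂ w := by
      rw [Fintype.linearIndependent_iff]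
      intro c hc m
      have h2 : Pj σ m.1 *ᵥ (∑ n, c n • w n) = c m • w m := by
        rw [show Pj σ m.1 *ᵥ (∑ n, c n • w n)
            = ∑ n, c n • (Pj σ m.1 *ᵥ w n) from ?_]
        · rw [Finset.sum_eq_single m]
          · rw [hPw m m, if_pos rfl]
          · intro n _ hnm
            rw [hPw m n, if_neg (fun h => hnm (Subtype.ext h.symm)), smul_zero]
          · intro h; exact absurd (Finset.mem_univ m) h
        · rw [show (∑ n, c n • w n) = ∑ n, (c n • w n) from rfl]
          have := _root_.map_sum (Matrix.mulVecLin (Pj σ m.1))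
            (fun n : {x // x ∈ S} => c n • w n) Finset.univ
          simp only [Matrix.mulVecLin_apply] at this
          rw [this]
          exact Finset.sum_congr rfl fun n _ => by
            rw [← Matrix.mulVecLin_apply, _root_.map_smul, Matrix.mulVecLin_apply]
      rw [hc, Matrix.mulVec_zero] at h2
      have hwm : w m ≠ 0 := hjn m
      by_contra hcm
      exact hwm (by
        have := h2.symm
        rwa [smul_eq_zero, or_iff_right hcm] at this)
    have := hli.fintype_card_le_finrank
    rwa [Fintype.card_coe, Module.finrank_pi] at this
  -- the "pair -picking" finset T
  let ef := Fintype.equivFin (Fin d → ZMod 3)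
  set T : Finset (Fin d → ZMod 3) := S.filter (fun n => ef n < ef (-n)) with hT
  have hT0 : (0 : Fin d → ZMod 3) ∉ T := by
    rw [hT, Finset.mem_filter]
    rintro ⟨-, h⟩
    rw [neg_zero] at h
    exact lt_irrefl _ h
  have hneg_ne : ∀ n : Fin d → ZMod 3, n ≠ 0 → n ≠ -n := by
    intro n hn h
    exact hn (funext fun i => zmod3_eq_neg_self _ (congrFun h i))
  have htri : ∀ n ∈ S, n ≠ 0 → n ∈ T ∨ -n ∈ T := by
    intro n hnS hn0
    have hne : ef n ≠ ef (-n) := fun h => hneg_ne n hn0 (ef.injective h)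
    rcases lt_or_gt_of_ne hne with h | h
    · left; rw [hT, Finset.mem_filter]; exact ⟨hnS, h⟩
    · right; rw [hT, Finset.mem_filter]
      refine ⟨hSneg n hnS, ?_⟩
      rw [neg_neg]
      exact h
  -- d ≤ |T|
  haveI : Fact (Nat.Prime 3) := ⟨by norm_num⟩
  have hdT : d ≤ T.card := by
    set prLin : (Fin d → ZMod 3) → ((Fin d → ZMod 3) →ₗ[ZMod 3] ZMod 3) := fun n =>
      { toFun := pr n
        map_add' := pr_add_right n
        map_smul' := fun c g => by simpa using pr_smul_right n g c } with hprLin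
    set Φ : (Fin d → ZMod 3) →ₗ[ZMod 3] ({x // x ∈ T} → ZMod 3) :=
      LinearMap.pi (fun t => prLin t.1) with hΦ
    have hker : ∀ g, Φ g = 0 → g = 0 := by
      intro g hg
      apply key1
      intro n hnS
      by_cases hn0 : n = 0
      · rw [hn0, pr_zero_left]
      · have hval : ∀ t ∈ T, pr t g = 0 := by
          intro t ht
          have := congrFun hg ⟨t, ht⟩
          simpa [hΦ, hprLin, LinearMap.pi_apply] using this
        rcases htri n hnS hn0 with h | h
        · exact hval n h
        · have := hval (-n) h
          rw [pr_neg_left, neg_eq_zero] at this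
          exact this
    have hinjΦ : Function.Injective Φ :=
      LinearMap.ker_eq_bot.mp (LinearMap.ker_eq_bot'.mpr hker)
    have := LinearMap.finrank_le_finrank_of_injective hinjΦ
    rwa [Module.finrank_pi, Module.finrank_pi, Fintype.card_fin, Fintype.card_coe] at this
  -- counting
  have hsub : insert 0 (T ∪ T.image (fun n => -n)) ⊆ S := by
    intro n hn
    rcases Finset.mem_insert.mp hn with h | h
    · rw [h]; exact hS0
    rcases Finset.mem_union.mp h with h | h
    · exact Finset.filter_subset _ _ h
    · rcases Finset.mem_image.mp h with ⟨m, hm, rfl⟩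
      exact hSneg m (Finset.filter_subset _ _ hm)
  have hdisj : Disjoint T (T.image (fun n => -n)) := by
    rw [Finset.disjoint_left]
    intro n hnT hnI
    rcases Finset.mem_image.mp hnI with ⟨m, hm, hmn⟩
    rw [hT, Finset.mem_filter] at hnT hm
    have h1 : m = -n := by rw [← hmn, neg_neg]
    rw [h1, neg_neg] at hm
    exact lt_asymm hnT.2 hm.2
  have h0notin : (0 : Fin d → ZMod 3) ∉ T ∪ T.image (fun n => -n) := by
    rw [Finset.mem_union]
    rintro (h | h)
    · exact hT0 h
    · rcases Finset.mem_image.mp h with ⟨m, hm, hm0⟩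
      rw [neg_eq_zero] at hm0
      rw [hm0] at hm
      exact hT0 hm
  have hcount : 1 + 2 * T.card ≤ S.card := by
    have h1 : (insert 0 (T ∪ T.image (fun n => -n))).card ≤ S.card :=
      Finset.card_le_card hsub
    rw [Finset.card_insert_of_notMem h0notin, Finset.card_union_of_disjoint hdisj,
      Finset.card_image_of_injective _ neg_injective] at h1
    omega
  omega

end Core
lemma intcast_addCircle_eq_zero (z : ℤ) : ((z : ℝ) : AddCircle (1 : ℝ)) = 0 := by
  rw [AddCircle.coe_eq_zero_iff]
  exact ⟨z, by simp⟩

/-- the 3-torsion embedding -/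
def emb {d : ℕ} (g : Fin d → ZMod 3) : Fin d → AddCircle (1 : ℝ) :=
  fun i => (((g i).val : ℝ) / 3 : ℝ)

lemma emb_zero {d : ℕ} : emb (0 : Fin d → ZMod 3) = 0 := by
  funext i
  show ((((0 : ZMod 3)).val : ℝ) / 3 : ℝ) = (0 : AddCircle (1:ℝ))
  rw [ZMod.val_zero]
  norm_num

lemma emb_add {d : ℕ} (g h : Fin d → ZMod 3) : emb (g + h) = emb g + emb h := by
  funext i
  show ((((g i + h i : ZMod 3)).val : ℝ) / 3 : ℝ)
      = (((((g i).val : ℝ) / 3 : ℝ) : AddCircle (1:ℝ)) + ((((h i).val : ℝ) / 3 : ℝ) : AddCircle (1:ℝ)))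
  set a := (g i).val
  set b := (h i).val
  rw [← AddCircle.coe_add]
  have hval : ((g i + h i : ZMod 3)).val = (a + b) % 3 := ZMod.val_add _ _
  rw [hval]
  set q := (a + b) / 3 with hq
  have h3q : 3 * q ≤ a + b := by omega
  have hmod : (a + b) % 3 = a + b - 3 * q := by omega
  have hqz : (((q : ℝ)) : AddCircle (1:ℝ)) = 0 := by
    have h := intcast_addCircle_eq_zero (q : ℤ)
    rwa [Int.cast_natCast] at h
  have key : (((a + b) % 3 : ℕ) : ℝ)/3 + (q : ℝ) = (a : ℝ)/3 + (b : ℝ)/3 := by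
    rw [hmod]
    push_cast [Nat.cast_sub h3q]
    ring
  calc (((((a + b) % 3 : ℕ) : ℝ)/3 : ℝ) : AddCircle (1:ℝ))
      = ((((a + b) % 3 : ℕ) : ℝ)/3 : ℝ) + (((q : ℝ) : ℝ) : AddCircle (1:ℝ)) := by
        rw [hqz, add_zero]
    _ = ((((((a + b) % 3 : ℕ) : ℝ)/3 + (q:ℝ)) : ℝ) : AddCircle (1:ℝ)) := by
        rw [AddCircle.coe_add]
    _ = _ := by rw [key]

lemma emb_eq_zero {d : ℕ} (g : Fin d → ZMod 3) (h : emb g = 0) : g = 0 := by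
  funext i
  have hi : ((((g i).val : ℝ) / 3 : ℝ) : AddCircle (1:ℝ)) = 0 := congrFun h i
  rw [AddCircle.coe_eq_zero_iff] at hi
  obtain ⟨z, hz⟩ := hi
  have hz' : (z : ℝ) = ((g i).val : ℝ) / 3 := by simpa using hz
  have hlt : (g i).val < 3 := (g i).val_lt
  have h0 : (0 : ℝ) ≤ ((g i).val : ℝ) / 3 := by positivity
  have h1 : ((g i).val : ℝ) / 3 < 1 := by
    rw [div_lt_one (by norm_num)]
    exact_mod_cast hlt
  have hz0 : z = 0 := by
    by_contra hzne
    rcases lt_or_gt_of_ne hzne with hneg | hpos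
    · have : (z : ℝ) < 0 := by exact_mod_cast hneg
      linarith [hz' ▸ this]
    · have : (1 : ℝ) ≤ (z : ℝ) := by exact_mod_cast hpos
      linarith [hz' ▸ this]
  rw [hz0] at hz'
  have : ((g i).val : ℝ) = 0 := by linarith [hz'.symm]
  have : (g i).val = 0 := by exact_mod_cast this
  rwa [ZMod.val_eq_zero] at this
end TorusRepAux

open TorusRepAux in
/-- Let `d > 0` and let `ρ : (ℝ/ℤ)^d → GL(ℝ^{2d})` be an injective
continuous group homomorphism (a faithful real `2d`-dimensional representation of the
compact `d`-torus). Then the subspace of common fixed vectors is zero. -/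
theorem fixed_vectors_of_faithful_torus_rep_eq_zero {d : ℕ} (hd : 0 < d)
    (ρ : (Fin d → AddCircle (1 : ℝ)) → Matrix.GeneralLinearGroup (Fin (2 * d)) ℝ)
    (hρcont : Continuous ρ)
    (hρinj : Function.Injective ρ)
    (hρhom : ∀ g h : Fin d → AddCircle (1 : ℝ), ρ (g + h) = ρ g * ρ h) :
    ∀ v : Fin (2 * d) → ℝ,
      (∀ g : Fin d → AddCircle (1 : ℝ),
        Matrix.mulVec (ρ g : Matrix (Fin (2 * d)) (Fin (2 * d)) ℝ) v = v) → v = 0 := by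
  intro v hvfix
  by_contra hv0
  -- `ρ 0 = 1`
  have hρ0 : ρ 0 = 1 := by
    have h := hρhom 0 0
    rw [add_zero] at h
    have h2 : ρ 0 * 1 = ρ 0 * ρ 0 := by rw [mul_one, ← h]
    exact (mul_left_cancel h2).symm
  -- the complexified 3-torsion representation
  set σ : (Fin d → ZMod 3) → Matrix (Fin (2 * d)) (Fin (2 * d)) ℂ :=
    fun g => ((ρ (emb g) : Matrix (Fin (2 * d)) (Fin (2 * d)) ℝ)).map Complex.ofRealHom
    with hσ
  have hone : σ 0 = 1 := by
    rw [hσ]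
    simp only [emb_zero, hρ0]
    rw [show ((1 : Matrix.GeneralLinearGroup (Fin (2 * d)) ℝ) :
        Matrix (Fin (2 * d)) (Fin (2 * d)) ℝ) = 1 from Units.val_one]
    exact Matrix.map_one _ (map_zero _) (map_one _)
  have hmul : ∀ g h, σ (g + h) = σ g * σ h := by
    intro g h
    rw [hσ]
    simp only [emb_add, hρhom]
    rw [show ((ρ (emb g) * ρ (emb h) : Matrix.GeneralLinearGroup (Fin (2 * d)) ℝ) :
        Matrix (Fin (2 * d)) (Fin (2 * d)) ℝ)
      = (ρ (emb g) : Matrix (Fin (2 * d)) (Fin (2 * d)) ℝ)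
        * (ρ (emb h) : Matrix (Fin (2 * d)) (Fin (2 * d)) ℝ) from Units.val_mul _ _]
    exact Matrix.map_mul
  have hreal : ∀ g i j, (starRingEnd ℂ) (σ g i j) = σ g i j := by
    intro g i j
    rw [hσ]
    simp only [Matrix.map_apply]
    exact Complex.conj_ofReal _
  have hinj : ∀ g, σ g = 1 → g = 0 := by
    intro g hg
    have hmat : (ρ (emb g) : Matrix (Fin (2 * d)) (Fin (2 * d)) ℝ) = 1 := by
      ext i j
      have h1 := congrFun (congrFun hg i) j
      rw [hσ] at h1
      simp only [Matrix.map_apply] at h1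
      by_cases hij : i = j
      · subst hij
        rw [Matrix.one_apply_eq] at h1 ⊢
        exact Complex.ofReal_injective (by rw [Complex.ofReal_one]; exact h1)
      · rw [Matrix.one_apply_ne hij] at h1 ⊢
        exact Complex.ofReal_injective (by rw [Complex.ofReal_zero]; exact h1)
    have hu : ρ (emb g) = 1 := Units.ext hmat
    have : emb g = 0 := by
      apply hρinj
      rw [hu, hρ0]
    exact emb_eq_zero g this
  -- complexified fixed vector
  set vc : Fin (2 * d) → ℂ := fun i => (v i : ℂ) with hvc
  have hvcne : vc ≠ 0 := by
    intro h
    apply hv0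
    funext i
    have h2 : (v i : ℂ) = 0 := by simpa [hvc] using congrFun h i
    exact_mod_cast h2
  have hfix : ∀ g, σ g *ᵥ vc = vc := by
    intro g
    funext i
    have h1 := RingHom.map_mulVec Complex.ofRealHom
      (ρ (emb g) : Matrix (Fin (2 * d)) (Fin (2 * d)) ℝ) v i
    rw [hvfix (emb g)] at h1
    rw [hσ]
    have h2 : (⇑Complex.ofRealHom ∘ v) = vc := rfl
    rw [← h2]
    exact h1.symm
  exact TorusRepAux.core (ι := Fin (2 * d))
    (by rw [Fintype.card_fin]) σ hone hmul hreal hinj vc hvcne hfix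
end
end

section
/- Let 0 < k < m be integers and let α̃ ∈ ℂ ∖ ℝ. Let the additive group ℂ act on X := (ℂ^k ∖ {0}) × (ℂ^{m−k} ∖ {0}) by t·(z, w) := (e^t z, e^{α̃ t} w). Then this action is free, and the composition of the inclusion S^{2k−1} × S^{2m−2k−1} ↪ X (where S^{2k−1} and S^{2m−2k−1} are the unit spheres of ℂ^k and ℂ^{m−k}) with the quotient map X → X/ℂ is a homeomorphism from S^{2k−1} × S^{2m−2k−1} onto the quotient space X/ℂ equipped with the quotient topology. -/
set_option maxHeartbeats 1000000

/-- The complement of the two coordinate subspace arrangements: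
`X = (ℂ^k ∖ {0}) × (ℂ^{m−k} ∖ {0})`. -/
def CEtotal (k m : ℕ) : Type :=
  {p : EuclideanSpace ℂ (Fin k) × EuclideanSpace ℂ (Fin (m - k)) // p.1 ≠ 0 ∧ p.2 ≠ 0}

noncomputable instance (k m : ℕ) : TopologicalSpace (CEtotal k m) :=
  instTopologicalSpaceSubtype

/-- The orbit relation of the action `t · (z, w) = (e^t z, e^{α̃ t} w)` of the additive
group `ℂ` on `X = (ℂ^k ∖ {0}) × (ℂ^{m−k} ∖ {0})`. -/
def CErel (k m : ℕ) (α : ℂ) (p q : CEtotal k m) : Prop :=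
  ∃ t : ℂ, q.val.1 = Complex.exp t • p.val.1 ∧ q.val.2 = Complex.exp (α * t) • p.val.2

/-- The normalizing parameter. -/
noncomputable def CEt (α : ℂ) {k m : ℕ} (p : CEtotal k m) : ℂ :=
  Complex.mk (-Real.log ‖p.val.1‖)
    ((α.re * (-Real.log ‖p.val.1‖) + Real.log ‖p.val.2‖) / α.im)

lemma CEt_re (α : ℂ) {k m : ℕ} (p : CEtotal k m) :
    (CEt α p).re = -Real.log ‖p.val.1‖ := rfl

lemma CEt_im (α : ℂ) {k m : ℕ} (p : CEtotal k m) :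
    (CEt α p).im = (α.re * (-Real.log ‖p.val.1‖) + Real.log ‖p.val.2‖) / α.im := rfl

lemma CEt_mul_re (α : ℂ) (hα : α.im ≠ 0) {k m : ℕ} (p : CEtotal k m) :
    (α * CEt α p).re = -Real.log ‖p.val.2‖ := by
  rw [Complex.mul_re, CEt_re, CEt_im, mul_div_assoc', mul_div_cancel_left₀ _ hα]
  ring

lemma CEnorm1 (α : ℂ) {k m : ℕ} (p : CEtotal k m) :
    ‖Complex.exp (CEt α p) • p.val.1‖ = 1 := by
  have h1 : ‖p.val.1‖ ≠ 0 := norm_ne_zero_iff.mpr p.prop.1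
  rw [norm_smul, Complex.norm_exp, CEt_re, Real.exp_neg,
    Real.exp_log (lt_of_le_of_ne (norm_nonneg _) (Ne.symm h1))]
  field_simp

lemma CEnorm2 (α : ℂ) (hα : α.im ≠ 0) {k m : ℕ} (p : CEtotal k m) :
    ‖Complex.exp (α * CEt α p) • p.val.2‖ = 1 := by
  have h2 : ‖p.val.2‖ ≠ 0 := norm_ne_zero_iff.mpr p.prop.2
  rw [norm_smul, Complex.norm_exp, CEt_mul_re α hα, Real.exp_neg,
    Real.exp_log (lt_of_le_of_ne (norm_nonneg _) (Ne.symm h2))]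
  field_simp

/-- The normalizing retraction to the product of spheres. -/
noncomputable def CEr (α : ℂ) (hα : α.im ≠ 0) {k m : ℕ} (p : CEtotal k m) :
    Metric.sphere (0 : EuclideanSpace ℂ (Fin k)) 1 ×
      Metric.sphere (0 : EuclideanSpace ℂ (Fin (m - k))) 1 :=
  (⟨Complex.exp (CEt α p) • p.val.1, mem_sphere_zero_iff_norm.mpr (CEnorm1 α p)⟩,
   ⟨Complex.exp (α * CEt α p) • p.val.2, mem_sphere_zero_iff_norm.mpr (CEnorm2 α hα p)⟩)

lemma CEt_rel (α : ℂ) (hα : α.im ≠ 0) {k m : ℕ} {p q : CEtotal k m} {s : ℂ}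
    (h1 : q.val.1 = Complex.exp s • p.val.1) (h2 : q.val.2 = Complex.exp (α * s) • p.val.2) :
    CEt α q = CEt α p - s := by
  have hp1 : ‖p.val.1‖ ≠ 0 := norm_ne_zero_iff.mpr p.prop.1
  have hp2 : ‖p.val.2‖ ≠ 0 := norm_ne_zero_iff.mpr p.prop.2
  have e1 : Real.log ‖q.val.1‖ = s.re + Real.log ‖p.val.1‖ := by
    rw [h1, norm_smul, Complex.norm_exp,
      Real.log_mul (Real.exp_ne_zero _) hp1, Real.log_exp]
  have e2 : Real.log ‖q.val.2‖ = (α * s).re + Real.log ‖p.val.2‖ := by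
    rw [h2, norm_smul, Complex.norm_exp,
      Real.log_mul (Real.exp_ne_zero _) hp2, Real.log_exp]
  apply Complex.ext
  · simp only [CEt_re, e1, Complex.sub_re]; ring
  · rw [CEt_im, Complex.sub_im, CEt_im, e1, e2, Complex.mul_re]
    field_simp
    ring

lemma CEr_invariant (α : ℂ) (hα : α.im ≠ 0) {k m : ℕ} (p q : CEtotal k m)
    (h : CErel k m α p q) : CEr α hα p = CEr α hα q := by
  obtain ⟨s, h1, h2⟩ := h
  have ht : CEt α q = CEt α p - s := CEt_rel α hα h1 h2
  have c1 : Complex.exp (CEt α q) • q.val.1 = Complex.exp (CEt α p) • p.val.1 := by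
    rw [h1, ht, smul_smul, ← Complex.exp_add, sub_add_cancel]
  have c2 : Complex.exp (α * CEt α q) • q.val.2 = Complex.exp (α * CEt α p) • p.val.2 := by
    rw [h2, ht, smul_smul, ← Complex.exp_add]
    congr 1
    ring
  unfold CEr
  exact Prod.ext (Subtype.ext c1.symm) (Subtype.ext c2.symm)

lemma CEr_continuous (α : ℂ) (hα : α.im ≠ 0) {k m : ℕ} :
    Continuous (CEr α hα (k := k) (m := m)) := by
  have hn1 : Continuous fun p : CEtotal k m => ‖p.val.1‖ :=
    (continuous_norm.comp (continuous_fst.comp continuous_subtype_val))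
  have hn2 : Continuous fun p : CEtotal k m => ‖p.val.2‖ :=
    (continuous_norm.comp (continuous_snd.comp continuous_subtype_val))
  have hl1 : Continuous fun p : CEtotal k m => Real.log ‖p.val.1‖ := by
    rw [continuous_iff_continuousAt]
    intro p
    exact ContinuousAt.comp (g := Real.log) (f := fun p : CEtotal k m => ‖p.val.1‖) (x := p)
      (Real.continuousAt_log (norm_ne_zero_iff.mpr p.prop.1)) hn1.continuousAt
  have hl2 : Continuous fun p : CEtotal k m => Real.log ‖p.val.2‖ := by
    rw [continuous_iff_continuousAt]
    intro p
    exact ContinuousAt.comp (g := Real.log) (f := fun p : CEtotal k m => ‖p.val.2‖) (x := p)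
      (Real.continuousAt_log (norm_ne_zero_iff.mpr p.prop.2)) hn2.continuousAt
  have hteq : Continuous fun p : CEtotal k m => CEt α p := by
    have heq : (fun p : CEtotal k m => CEt α p) = fun p =>
        (↑(-Real.log ‖p.val.1‖) : ℂ) +
          (↑((α.re * (-Real.log ‖p.val.1‖) + Real.log ‖p.val.2‖) / α.im) : ℝ) * Complex.I := by
      funext p
      apply Complex.ext <;> simp [CEt_re, CEt_im]
    rw [heq]
    apply Continuous.add
    · exact Complex.continuous_ofReal.comp hl1.neg
    · apply Continuous.mul _ continuous_const
      exact Complex.continuous_ofReal.comp (((continuous_const.mul hl1.neg).add hl2).div_const _)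
  apply Continuous.prodMk
  · apply Continuous.subtype_mk
    exact ((Complex.continuous_exp.comp hteq).smul
      (continuous_fst.comp continuous_subtype_val))
  · apply Continuous.subtype_mk
    exact ((Complex.continuous_exp.comp ((continuous_const.mul hteq))).smul
      (continuous_snd.comp continuous_subtype_val))

lemma CEr_incl (α : ℂ) (hα : α.im ≠ 0) {k m : ℕ}
    (p : Metric.sphere (0 : EuclideanSpace ℂ (Fin k)) 1 ×
      Metric.sphere (0 : EuclideanSpace ℂ (Fin (m - k))) 1) :
    CEr α hα (⟨((p.1 : EuclideanSpace ℂ (Fin k)), (p.2 : EuclideanSpace ℂ (Fin (m - k)))),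
      ne_zero_of_mem_unit_sphere p.1, ne_zero_of_mem_unit_sphere p.2⟩ : CEtotal k m) = p := by
  have ht0 : CEt α (⟨((p.1 : EuclideanSpace ℂ (Fin k)),
      (p.2 : EuclideanSpace ℂ (Fin (m - k)))),
      ne_zero_of_mem_unit_sphere p.1, ne_zero_of_mem_unit_sphere p.2⟩ : CEtotal k m) = 0 := by
    apply Complex.ext <;> simp [CEt, CEt_re, CEt_im, mem_sphere_zero_iff_norm.mp p.1.prop,
        mem_sphere_zero_iff_norm.mp p.2.prop]
  unfold CEr
  apply Prod.ext <;> apply Subtype.ext <;> simp [ht0]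

/-- The homeomorphism between the product of spheres and the orbit space. -/
noncomputable def CEhomeo (α : ℂ) (hα : α.im ≠ 0) (k m : ℕ) :
    (Metric.sphere (0 : EuclideanSpace ℂ (Fin k)) 1 ×
      Metric.sphere (0 : EuclideanSpace ℂ (Fin (m - k))) 1) ≃ₜ Quot (CErel k m α) where
  toFun p := Quot.mk (CErel k m α)
      ⟨((p.1 : EuclideanSpace ℂ (Fin k)), (p.2 : EuclideanSpace ℂ (Fin (m - k)))),
        ne_zero_of_mem_unit_sphere p.1, ne_zero_of_mem_unit_sphere p.2⟩
  invFun := Quot.lift (CEr α hα) (CEr_invariant α hα)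
  left_inv p := CEr_incl α hα p
  right_inv := Quot.ind fun p => (Quot.sound ⟨CEt α p, rfl, rfl⟩).symm
  continuous_toFun := continuous_quot_mk.comp (Continuous.subtype_mk
      ((continuous_subtype_val.comp continuous_fst).prodMk
        (continuous_subtype_val.comp continuous_snd)) _)
  continuous_invFun := continuous_quot_lift _ (CEr_continuous α hα)

/-- Let `0 < k < m` and `α̃ ∈ ℂ ∖ ℝ`. The action of `ℂ` on
`X = (ℂ^k ∖ {0}) × (ℂ^{m−k} ∖ {0})` by `t·(z,w) = (e^t z, e^{α̃ t} w)` is free, and the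
composition of the inclusion `S^{2k−1} × S^{2m−2k−1} ↪ X` with the quotient map
`X → X/ℂ` is a homeomorphism onto the quotient space. -/
theorem calabiEckmann_quotient_homeomorph {k m : ℕ} (hk : 0 < k) (hkm : k < m)
    (α : ℂ) (hα : α ∉ Set.range ((↑) : ℝ → ℂ)) :
    (∀ (t : ℂ) (p : CEtotal k m),
        Complex.exp t • p.val.1 = p.val.1 ∧ Complex.exp (α * t) • p.val.2 = p.val.2
          → t = 0) ∧
    IsHomeomorph (fun p : Metric.sphere (0 : EuclideanSpace ℂ (Fin k)) 1 ×
        Metric.sphere (0 : EuclideanSpace ℂ (Fin (m - k))) 1 =>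
      Quot.mk (CErel k m α)
        ⟨((p.1 : EuclideanSpace ℂ (Fin k)), (p.2 : EuclideanSpace ℂ (Fin (m - k)))),
          ne_zero_of_mem_unit_sphere p.1, ne_zero_of_mem_unit_sphere p.2⟩) := by
  have him : α.im ≠ 0 := by
    intro h
    exact hα ⟨α.re, by apply Complex.ext <;> simp [h]⟩
  constructor
  · -- freeness
    rintro t p ⟨h1, h2⟩
    have e1 : Complex.exp t = 1 := by
      have h := sub_smul (Complex.exp t) 1 p.val.1
      rw [h1, one_smul, sub_self] at h
      rcases smul_eq_zero.mp h with h | h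
      · exact sub_eq_zero.mp h
      · exact absurd h p.prop.1
    have e2 : Complex.exp (α * t) = 1 := by
      have h := sub_smul (Complex.exp (α * t)) 1 p.val.2
      rw [h2, one_smul, sub_self] at h
      rcases smul_eq_zero.mp h with h | h
      · exact sub_eq_zero.mp h
      · exact absurd h p.prop.2
    obtain ⟨n, hn⟩ := Complex.exp_eq_one_iff.mp e1
    obtain ⟨n', hn'⟩ := Complex.exp_eq_one_iff.mp e2
    by_cases hn0 : n = 0
    · rw [hn, hn0]; simp
    · exfalso
      apply hα
      refine ⟨(n' : ℝ) / (n : ℝ), ?_⟩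
      have key : α * ((n : ℂ) * (2 * Real.pi * Complex.I))
          = (n' : ℂ) * (2 * Real.pi * Complex.I) := by rw [← hn, hn']
      have h2pi : (2 * (Real.pi : ℂ) * Complex.I) ≠ 0 := by
        simp [Real.pi_ne_zero, Complex.I_ne_zero, Complex.ofReal_ne_zero]
      have hnC : (n : ℂ) ≠ 0 := Int.cast_ne_zero.mpr hn0
      have key2 : α * (n : ℂ) = (n' : ℂ) :=
        mul_right_cancel₀ h2pi (by linear_combination key)
      push_cast
      rw [div_eq_iff hnC]
      linear_combination -key2
  · exact (CEhomeo α him k m).isHomeomorph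
end
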